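/- Let $P: \mathbb{C}^2 \to \mathbb{C}$ be given by $P(z_1,z_2) = az_1^2 + bz_2^2 + cz_1z_2$ with $a,b,c \in \{-1,1\}$, and let $\|P\| = \sup\{|P(z_1,z_2)| : |z_1| \le 1, |z_2| \le 1\}$. Then $\|P\| \in \{3, \sqrt{5}\}$; specifically $\|P\| = 3$ if $ab > 0$ and $\|P\| = \sqrt{5}$ if $ab < 0$. -/

import Mathlib

private lemma key (c : ℝ) (hc : c = 1 ∨ c = -1) (z₁ z₂ : ℂ) (h1 : ‖z₁‖ ≤ 1) (h2 : ‖z₂‖ ≤ 1) :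
    ‖z₁ ^ 2 - z₂ ^ 2 + (c : ℂ) * z₁ * z₂‖ ≤ Real.sqrt 5 := by
  rw [Complex.norm_def]
  apply Real.sqrt_le_sqrt
  have h1' : Complex.normSq z₁ ≤ 1 := by
    have := pow_le_pow_left₀ (norm_nonneg z₁) h1 2
    rwa [Complex.sq_norm, one_pow] at this
  have h2' : Complex.normSq z₂ ≤ 1 := by
    have := pow_le_pow_left₀ (norm_nonneg z₂) h2 2
    rwa [Complex.sq_norm, one_pow] at this
  obtain ⟨p, q⟩ := z₁
  obtain ⟨r, s⟩ := z₂
  simp only [Complex.normSq_mk, Complex.normSq_apply, Complex.add_re, Complex.add_im,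
    Complex.sub_re, Complex.sub_im, Complex.mul_re, Complex.mul_im, Complex.ofReal_re,
    Complex.ofReal_im, pow_two] at *
  rcases hc with rfl | rfl <;>
  nlinarith [sq_nonneg (4*(p*r+q*s) + (p^2+q^2-r^2-s^2)),
    sq_nonneg (4*(p*r+q*s) - (p^2+q^2-r^2-s^2)),
    mul_nonneg (by nlinarith [sq_nonneg p, sq_nonneg q, sq_nonneg r, sq_nonneg s] :
      (0:ℝ) ≤ 2 - (p*p+q*q) - (r*r+s*s))
      (by nlinarith [sq_nonneg p, sq_nonneg q, sq_nonneg r, sq_nonneg s] :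
      (0:ℝ) ≤ 2 + (p*p+q*q) + (r*r+s*s)),
    sq_nonneg (p*s - q*r), sq_nonneg (p*r+q*s)]

private lemma sup_eq (a b c : ℝ) (w₁ w₂ : ℂ) (hw₁ : ‖w₁‖ ≤ 1) (hw₂ : ‖w₂‖ ≤ 1) (M : ℝ)
    (hM : M = ‖(a : ℂ) * w₁ ^ 2 + (b : ℂ) * w₂ ^ 2 + (c : ℂ) * w₁ * w₂‖)
    (hub : ∀ z₁ z₂ : ℂ, ‖z₁‖ ≤ 1 → ‖z₂‖ ≤ 1 →
      ‖(a : ℂ) * z₁ ^ 2 + (b : ℂ) * z₂ ^ 2 + (c : ℂ) * z₁ * z₂‖ ≤ M) :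
    sSup {x : ℝ | ∃ z₁ z₂ : ℂ, ‖z₁‖ ≤ 1 ∧ ‖z₂‖ ≤ 1 ∧
        x = ‖(a : ℂ) * z₁ ^ 2 + (b : ℂ) * z₂ ^ 2 + (c : ℂ) * z₁ * z₂‖} = M := by
  have hmem : M ∈ {x : ℝ | ∃ z₁ z₂ : ℂ, ‖z₁‖ ≤ 1 ∧ ‖z₂‖ ≤ 1 ∧
      x = ‖(a : ℂ) * z₁ ^ 2 + (b : ℂ) * z₂ ^ 2 + (c : ℂ) * z₁ * z₂‖} := ⟨w₁, w₂, hw₁, hw₂, hM⟩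
  have hbdd : ∀ x ∈ {x : ℝ | ∃ z₁ z₂ : ℂ, ‖z₁‖ ≤ 1 ∧ ‖z₂‖ ≤ 1 ∧
      x = ‖(a : ℂ) * z₁ ^ 2 + (b : ℂ) * z₂ ^ 2 + (c : ℂ) * z₁ * z₂‖}, x ≤ M := by
    rintro x ⟨z₁, z₂, h1, h2, rfl⟩
    exact hub z₁ z₂ h1 h2
  exact le_antisymm (csSup_le ⟨M, hmem⟩ hbdd) (le_csSup ⟨M, hbdd⟩ hmem)

private lemma ub3 (a b c : ℝ) (ha : a = -1 ∨ a = 1) (hb : b = -1 ∨ b = 1) (hc : c = -1 ∨ c = 1)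
    (z₁ z₂ : ℂ) (h1 : ‖z₁‖ ≤ 1) (h2 : ‖z₂‖ ≤ 1) :
    ‖(a : ℂ) * z₁ ^ 2 + (b : ℂ) * z₂ ^ 2 + (c : ℂ) * z₁ * z₂‖ ≤ 3 := by
  have na : ‖(a : ℂ)‖ = 1 := by rcases ha with rfl | rfl <;> norm_num
  have nb : ‖(b : ℂ)‖ = 1 := by rcases hb with rfl | rfl <;> norm_num
  have nc : ‖(c : ℂ)‖ = 1 := by rcases hc with rfl | rfl <;> norm_num
  calc ‖(a : ℂ) * z₁ ^ 2 + (b : ℂ) * z₂ ^ 2 + (c : ℂ) * z₁ * z₂‖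
      ≤ ‖(a : ℂ) * z₁ ^ 2‖ + ‖(b : ℂ) * z₂ ^ 2‖ + ‖(c : ℂ) * z₁ * z₂‖ := norm_add₃_le
    _ ≤ 1 + 1 + 1 := by
        gcongr <;> rw [norm_mul]
        · rw [na, one_mul, norm_pow]
          exact pow_le_one₀ (norm_nonneg _) h1
        · rw [nb, one_mul, norm_pow]
          exact pow_le_one₀ (norm_nonneg _) h2
        · rw [norm_mul, nc, one_mul]
          exact mul_le_one₀ h1 (norm_nonneg _) h2
    _ = 3 := by norm_num

theorem bernoulli_poly_norm (a b c : ℝ)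
    (ha : a = -1 ∨ a = 1) (hb : b = -1 ∨ b = 1) (hc : c = -1 ∨ c = 1) :
    ((sSup {x : ℝ | ∃ z₁ z₂ : ℂ, ‖z₁‖ ≤ 1 ∧ ‖z₂‖ ≤ 1 ∧
        x = ‖(a : ℂ) * z₁ ^ 2 + (b : ℂ) * z₂ ^ 2 + (c : ℂ) * z₁ * z₂‖} = 3 ∨
      sSup {x : ℝ | ∃ z₁ z₂ : ℂ, ‖z₁‖ ≤ 1 ∧ ‖z₂‖ ≤ 1 ∧
        x = ‖(a : ℂ) * z₁ ^ 2 + (b : ℂ) * z₂ ^ 2 + (c : ℂ) * z₁ * z₂‖} = Real.sqrt 5) ∧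
      (a * b > 0 → sSup {x : ℝ | ∃ z₁ z₂ : ℂ, ‖z₁‖ ≤ 1 ∧ ‖z₂‖ ≤ 1 ∧
        x = ‖(a : ℂ) * z₁ ^ 2 + (b : ℂ) * z₂ ^ 2 + (c : ℂ) * z₁ * z₂‖} = 3) ∧
      (a * b < 0 → sSup {x : ℝ | ∃ z₁ z₂ : ℂ, ‖z₁‖ ≤ 1 ∧ ‖z₂‖ ≤ 1 ∧
        x = ‖(a : ℂ) * z₁ ^ 2 + (b : ℂ) * z₂ ^ 2 + (c : ℂ) * z₁ * z₂‖} = Real.sqrt 5)) := by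
  have hpos : a * b > 0 → sSup {x : ℝ | ∃ z₁ z₂ : ℂ, ‖z₁‖ ≤ 1 ∧ ‖z₂‖ ≤ 1 ∧
      x = ‖(a : ℂ) * z₁ ^ 2 + (b : ℂ) * z₂ ^ 2 + (c : ℂ) * z₁ * z₂‖} = 3 := by
    intro hab
    have hub := ub3 a b c ha hb hc
    rcases ha with rfl | rfl <;> rcases hb with rfl | rfl
    · -- a = -1, b = -1
      rcases hc with rfl | rfl
      · refine sup_eq _ _ _ 1 1 (by norm_num) (by norm_num) 3 ?_ hub
        rw [show ((-1:ℝ):ℂ) * 1 ^ 2 + ((-1:ℝ):ℂ) * 1 ^ 2 + ((-1:ℝ):ℂ) * 1 * 1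
            = (((-3):ℝ):ℂ) by push_cast; ring, Complex.norm_real]
        norm_num
      · refine sup_eq _ _ _ 1 (-1) (by norm_num) (by norm_num) 3 ?_ hub
        rw [show ((-1:ℝ):ℂ) * 1 ^ 2 + ((-1:ℝ):ℂ) * (-1) ^ 2 + ((1:ℝ):ℂ) * 1 * (-1)
            = (((-3):ℝ):ℂ) by push_cast; ring, Complex.norm_real]
        norm_num
    · norm_num at hab
    · norm_num at hab
    · -- a = 1, b = 1
      rcases hc with rfl | rfl
      · refine sup_eq _ _ _ 1 (-1) (by norm_num) (by norm_num) 3 ?_ hub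
        rw [show ((1:ℝ):ℂ) * 1 ^ 2 + ((1:ℝ):ℂ) * (-1) ^ 2 + ((-1:ℝ):ℂ) * 1 * (-1)
            = ((3:ℝ):ℂ) by push_cast; ring, Complex.norm_real]
        norm_num
      · refine sup_eq _ _ _ 1 1 (by norm_num) (by norm_num) 3 ?_ hub
        rw [show ((1:ℝ):ℂ) * 1 ^ 2 + ((1:ℝ):ℂ) * 1 ^ 2 + ((1:ℝ):ℂ) * 1 * 1
            = ((3:ℝ):ℂ) by push_cast; ring, Complex.norm_real]
        norm_num
  have hneg : a * b < 0 → sSup {x : ℝ | ∃ z₁ z₂ : ℂ, ‖z₁‖ ≤ 1 ∧ ‖z₂‖ ≤ 1 ∧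
      x = ‖(a : ℂ) * z₁ ^ 2 + (b : ℂ) * z₂ ^ 2 + (c : ℂ) * z₁ * z₂‖} = Real.sqrt 5 := by
    intro hab
    have hI : ‖Complex.I‖ ≤ 1 := by norm_num
    rcases ha with rfl | rfl <;> rcases hb with rfl | rfl
    case inl.inl => norm_num at hab
    case inr.inr => norm_num at hab
    · -- a = -1, b = 1
      refine sup_eq _ _ _ 1 Complex.I (by norm_num) hI (Real.sqrt 5) ?_ ?_
      · rw [show ((-1 : ℝ) : ℂ) * 1 ^ 2 + ((1 : ℝ) : ℂ) * Complex.I ^ 2 +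
            (c : ℂ) * 1 * Complex.I = (-2 : ℝ) + (c : ℝ) * Complex.I by
          rw [Complex.I_sq]; push_cast; ring]
        rw [Complex.norm_def, Complex.normSq_add_mul_I]
        rcases hc with rfl | rfl <;> norm_num
      · intro z₁ z₂ h1 h2
        rw [show ((-1 : ℝ) : ℂ) * z₁ ^ 2 + ((1 : ℝ) : ℂ) * z₂ ^ 2 + (c : ℂ) * z₁ * z₂ =
            -(z₁ ^ 2 - z₂ ^ 2 + ((-c : ℝ) : ℂ) * z₁ * z₂) by push_cast; ring, norm_neg]
        exact key (-c) (by rcases hc with rfl | rfl <;> norm_num) z₁ z₂ h1 h2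
    · -- a = 1, b = -1
      refine sup_eq _ _ _ 1 Complex.I (by norm_num) hI (Real.sqrt 5) ?_ ?_
      · rw [show ((1 : ℝ) : ℂ) * 1 ^ 2 + ((-1 : ℝ) : ℂ) * Complex.I ^ 2 +
            (c : ℂ) * 1 * Complex.I = (2 : ℝ) + (c : ℝ) * Complex.I by
          rw [Complex.I_sq]; push_cast; ring]
        rw [Complex.norm_def, Complex.normSq_add_mul_I]
        rcases hc with rfl | rfl <;> norm_num
      · intro z₁ z₂ h1 h2
        rw [show ((1 : ℝ) : ℂ) * z₁ ^ 2 + ((-1 : ℝ) : ℂ) * z₂ ^ 2 + (c : ℂ) * z₁ * z₂ =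
            z₁ ^ 2 - z₂ ^ 2 + ((c : ℝ) : ℂ) * z₁ * z₂ by push_cast; ring]
        exact key c (by rcases hc with rfl | rfl <;> norm_num) z₁ z₂ h1 h2
  refine ⟨?_, hpos, hneg⟩
  have habne : a * b > 0 ∨ a * b < 0 := by
    rcases ha with rfl | rfl <;> rcases hb with rfl | rfl <;> norm_num
  rcases habne with h | h
  · exact Or.inl (hpos h)
  · exact Or.inr (hneg h)
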